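/- arXiv:1308.1976 — 2 statements merged into one kernel-verified Lean document; each statement's English description precedes it below -/
import Mathlib

section
/- Let G = ⟨A * B; [H,K]=1⟩ with U = HK ≅ H × K. Suppose A is 𝓕_π-quasi-regular by H and B is 𝓕_π-quasi-regular by K. Then a subgroup of U is separable by the family Θ_π(HK) = {(X ∩ H)(Y ∩ K) : X ∈ Ω_π(A), Y ∈ Ω_π(B)} if and only if it is separable by Ω_π(HK), the family of normal subgroups of HK of finite π-index; consequently Λ_π(HK) = Δ_π(HK). -/
open Pointwise

def IsPiNumber (π : Set ℕ) (n : ℕ) : Prop := n ≠ 0 ∧ ∀ p : ℕ, p.Prime → p ∣ n → p ∈ π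

def IsPiPrimeNumber (π : Set ℕ) (n : ℕ) : Prop := n ≠ 0 ∧ ∀ p : ℕ, p.Prime → p ∣ n → p ∉ π

/-- `N` is a normal subgroup of finite π-index, i.e. `N ∈ Ω_π(X)`. -/
def InOmega (π : Set ℕ) {X : Type*} [Group X] (N : Subgroup X) : Prop :=
  N.Normal ∧ IsPiNumber π N.index

/-- `Y` is separable by the family `F` of subgroups. -/
def SepBy {X : Type*} [Group X] (F : Set (Subgroup X)) (Y : Subgroup X) : Prop :=
  (⋂ N ∈ F, (Y : Set X) * (N : Set X)) = (Y : Set X)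

/-- `Y` is 𝓕_π-separable in `X`. -/
def SepIn (π : Set ℕ) {X : Type*} [Group X] (Y : Subgroup X) : Prop :=
  SepBy {N : Subgroup X | InOmega π N} Y

/-- `Y` is π'-isolated in `X`. -/
def Isolated (π : Set ℕ) {X : Type*} [Group X] (Y : Subgroup X) : Prop :=
  ∀ x : X, ∀ q : ℕ, IsPiPrimeNumber π q → x ^ q ∈ Y → x ∈ Y

/-- `X` is residually a finite π-group. -/
def ResiduallyPi (π : Set ℕ) (X : Type*) [Group X] : Prop :=
  ∀ x : X, x ≠ 1 → ∃ N : Subgroup X, InOmega π N ∧ x ∉ N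

lemma isPi_of_dvd {π : Set ℕ} {n d : ℕ} (hn : IsPiNumber π n) (h : d ∣ n) :
    IsPiNumber π d :=
  ⟨fun hd => hn.1 (Nat.eq_zero_of_zero_dvd (hd ▸ h)),
   fun p hp hpd => hn.2 p hp (hpd.trans h)⟩

lemma isPi_mul {π : Set ℕ} {m n : ℕ} (hm : IsPiNumber π m) (hn : IsPiNumber π n) :
    IsPiNumber π (m * n) :=
  ⟨Nat.mul_ne_zero hm.1 hn.1, fun p hp hpd =>
    ((Nat.Prime.dvd_mul hp).mp hpd).elim (hm.2 p hp) (hn.2 p hp)⟩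

/-- Two families of subgroups that are mutually cofinal (downwards) give the same
separability notion. -/
lemma sepBy_iff_of_cofinal {X : Type*} [Group X] {F G : Set (Subgroup X)}
    (hFG : ∀ Q ∈ F, ∃ N ∈ G, N ≤ Q) (hGF : ∀ N ∈ G, ∃ Q ∈ F, Q ≤ N)
    (C : Subgroup X) : SepBy F C ↔ SepBy G C := by
  have key : (⋂ N ∈ F, (C : Set X) * (N : Set X)) = (⋂ N ∈ G, (C : Set X) * (N : Set X)) := by
    apply Set.Subset.antisymm
    · intro x hx
      simp only [Set.mem_iInter] at hx ⊢
      intro N hN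
      obtain ⟨Q, hQ, hQN⟩ := hGF N hN
      exact Set.mul_subset_mul_left (by exact_mod_cast hQN) (hx Q hQ)
    · intro x hx
      simp only [Set.mem_iInter] at hx ⊢
      intro Q hQ
      obtain ⟨N, hN, hNQ⟩ := hFG Q hQ
      exact Set.mul_subset_mul_left (by exact_mod_cast hNQ) (hx N hN)
  unfold SepBy
  rw [key]

/-- If `A` is 𝓕_π-quasi-regular by `H` and `B` is 𝓕_π-quasi-regular by `K`, then a
subgroup of `HK ≅ H × K` is separable by `Θ_π(HK)` iff it is separable by
`Ω_π(HK)`; consequently `Λ_π(HK) = Δ_π(HK)`. -/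
theorem theta_sep_iff_omega_sep (π : Set ℕ) {A B : Type*} [Group A] [Group B]
    (H : Subgroup A) (K : Subgroup B)
    (hA : ∀ M : Subgroup ↥H, M.Normal → IsPiNumber π M.index →
      ∃ N : Subgroup A, InOmega π N ∧ N.subgroupOf H ≤ M)
    (hB : ∀ M : Subgroup ↥K, M.Normal → IsPiNumber π M.index →
      ∃ N : Subgroup B, InOmega π N ∧ N.subgroupOf K ≤ M) :
    (∀ C : Subgroup (↥H × ↥K),
      SepBy {Q : Subgroup (↥H × ↥K) | ∃ (XA : Subgroup A) (YB : Subgroup B),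
          InOmega π XA ∧ InOmega π YB ∧ Q = (XA.subgroupOf H).prod (YB.subgroupOf K)} C ↔
      SepIn π C) ∧
    {C : Subgroup (↥H × ↥K) | (∃ g, C = Subgroup.zpowers g) ∧ Isolated π C ∧
        ¬ SepBy {Q : Subgroup (↥H × ↥K) | ∃ (XA : Subgroup A) (YB : Subgroup B),
            InOmega π XA ∧ InOmega π YB ∧ Q = (XA.subgroupOf H).prod (YB.subgroupOf K)} C} =
    {C : Subgroup (↥H × ↥K) | (∃ g, C = Subgroup.zpowers g) ∧ Isolated π C ∧
        ¬ SepIn π C} := by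
  -- every Θ-member is an Ω-member
  have hTO : ∀ Q : Subgroup (↥H × ↥K),
      (∃ (XA : Subgroup A) (YB : Subgroup B),
        InOmega π XA ∧ InOmega π YB ∧ Q = (XA.subgroupOf H).prod (YB.subgroupOf K)) →
      InOmega π Q := by
    rintro Q ⟨XA, YB, ⟨hXAn, hXAi⟩, ⟨hYBn, hYBi⟩, rfl⟩
    constructor
    · haveI := hXAn
      haveI := hYBn
      haveI : (XA.subgroupOf H).Normal := Subgroup.Normal.comap hXAn _
      haveI : (YB.subgroupOf K).Normal := Subgroup.Normal.comap hYBn _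
      exact Subgroup.prod_normal _ _
    · rw [Subgroup.index_prod]
      apply isPi_mul
      · exact isPi_of_dvd hXAi (by
          haveI := hXAn
          exact XA.relIndex_dvd_index_of_normal H)
      · exact isPi_of_dvd hYBi (by
          haveI := hYBn
          exact YB.relIndex_dvd_index_of_normal K)
  -- below every Ω-member there is a Θ-member
  have hOT : ∀ N : Subgroup (↥H × ↥K), InOmega π N →
      ∃ Q : Subgroup (↥H × ↥K),
        (∃ (XA : Subgroup A) (YB : Subgroup B),
          InOmega π XA ∧ InOmega π YB ∧ Q = (XA.subgroupOf H).prod (YB.subgroupOf K)) ∧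
        Q ≤ N := by
    rintro N ⟨hNn, hNi⟩
    haveI := hNn
    set M₁ : Subgroup ↥H := N.comap (MonoidHom.inl ↥H ↥K) with hM₁
    set M₂ : Subgroup ↥K := N.comap (MonoidHom.inr ↥H ↥K) with hM₂
    have hM₁n : M₁.Normal := Subgroup.Normal.comap hNn _
    have hM₂n : M₂.Normal := Subgroup.Normal.comap hNn _
    have hM₁i : IsPiNumber π M₁.index := by
      refine isPi_of_dvd hNi ?_
      rw [Subgroup.index_comap]
      exact N.relIndex_dvd_index_of_normal _
    have hM₂i : IsPiNumber π M₂.index := by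
      refine isPi_of_dvd hNi ?_
      rw [Subgroup.index_comap]
      exact N.relIndex_dvd_index_of_normal _
    obtain ⟨XA, hXA, hXAle⟩ := hA M₁ hM₁n hM₁i
    obtain ⟨YB, hYB, hYBle⟩ := hB M₂ hM₂n hM₂i
    refine ⟨(XA.subgroupOf H).prod (YB.subgroupOf K), ⟨XA, YB, hXA, hYB, rfl⟩, ?_⟩
    rintro ⟨h, k⟩ ⟨hh, hk⟩
    have h1 : ((h, 1) : ↥H × ↥K) ∈ N := hXAle hh
    have h2 : ((1, k) : ↥H × ↥K) ∈ N := hYBle hk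
    have : ((h, 1) : ↥H × ↥K) * (1, k) ∈ N := N.mul_mem h1 h2
    simpa using this
  have main : ∀ C : Subgroup (↥H × ↥K),
      SepBy {Q : Subgroup (↥H × ↥K) | ∃ (XA : Subgroup A) (YB : Subgroup B),
          InOmega π XA ∧ InOmega π YB ∧ Q = (XA.subgroupOf H).prod (YB.subgroupOf K)} C ↔
      SepIn π C := by
    intro C
    apply sepBy_iff_of_cofinal
    · intro Q hQ
      exact ⟨Q, hTO Q hQ, le_refl Q⟩
    · intro N hN
      exact hOT N hN
  refine ⟨main, ?_⟩
  ext C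
  simp only [Set.mem_setOf_eq, main C]
end

section
/- Let H and K be groups and let G = H × K be their direct product. Let C = ⟨(h,k)⟩ be a cyclic subgroup with h ∈ H of finite order and k ∈ K of finite order, and suppose H and K are residually finite π-groups. Then for every g ∈ G ∖ C there exist normal subgroups X of H and Y of K with finite π-group quotients such that g ∉ C·(X × Y). -/
open Pointwise

lemma inOmega_top (π : Set ℕ) {X : Type*} [Group X] : InOmega π (⊤ : Subgroup X) := by
  refine ⟨inferInstance, ?_⟩
  rw [Subgroup.index_top]
  exact ⟨one_ne_zero, fun p hp hdvd => absurd (Nat.dvd_one.mp hdvd) hp.ne_one⟩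

lemma inOmega_inf (π : Set ℕ) {X : Type*} [Group X] {N M : Subgroup X}
    (hN : InOmega π N) (hM : InOmega π M) : InOmega π (N ⊓ M) := by
  have hnorm : (N ⊓ M).Normal :=
    ⟨fun x hx g => Subgroup.mem_inf.mpr
      ⟨hN.1.conj_mem _ (Subgroup.mem_inf.mp hx).1 g, hM.1.conj_mem _ (Subgroup.mem_inf.mp hx).2 g⟩⟩
  have hdvd : (N ⊓ M).index ∣ N.index * M.index := by
    rw [← Subgroup.relIndex_mul_index (inf_le_right : N ⊓ M ≤ M), Subgroup.inf_relIndex_right]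
    have : Fact True := ⟨trivial⟩
    exact Nat.mul_dvd_mul (@Subgroup.relIndex_dvd_index_of_normal _ _ N M hN.1) dvd_rfl
  have hne : N.index * M.index ≠ 0 := Nat.mul_ne_zero hN.2.1 hM.2.1
  refine ⟨hnorm, fun hz => hne (Nat.eq_zero_of_zero_dvd (hz ▸ hdvd)), fun p hp hpd => ?_⟩
  rcases hp.dvd_mul.mp (hpd.trans hdvd) with h1 | h1
  · exact hN.2.2 p hp h1
  · exact hM.2.2 p hp h1

lemma inOmega_finset_inf (π : Set ℕ) {X : Type*} [Group X] (s : Finset ℕ) (f : ℕ → Subgroup X)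
    (hf : ∀ i ∈ s, InOmega π (f i)) : InOmega π (s.inf f) := by
  induction s using Finset.cons_induction with
  | empty => simpa using inOmega_top π
  | cons a s ha ih =>
    rw [Finset.inf_cons]
    exact inOmega_inf π (hf a (by simp)) (ih fun i hi => hf i (by simp [hi]))

lemma zpow_eq_pow_toNat_emod {G' : Type*} [Group G'] (x : G') {L : ℕ} (hx : orderOf x ∣ L)
    (hL : 0 < L) (n : ℤ) : x ^ n = x ^ ((n % (L : ℤ)).toNat) := by
  have hxL : x ^ (L : ℤ) = 1 := by
    rw [zpow_natCast]; exact orderOf_dvd_iff_pow_eq_one.mp hx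
  have hnonneg : 0 ≤ n % (L : ℤ) := Int.emod_nonneg n (by exact_mod_cast hL.ne')
  calc x ^ n = x ^ ((L : ℤ) * (n / (L : ℤ)) + n % (L : ℤ)) := by rw [Int.mul_ediv_add_emod]
    _ = (x ^ (L : ℤ)) ^ (n / (L : ℤ)) * x ^ (n % (L : ℤ)) := by rw [zpow_add, zpow_mul]
    _ = x ^ (n % (L : ℤ)) := by rw [hxL, one_zpow, one_mul]
    _ = x ^ (((n % (L : ℤ)).toNat : ℤ)) := by rw [Int.toNat_of_nonneg hnonneg]
    _ = x ^ ((n % (L : ℤ)).toNat) := zpow_natCast _ _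

/-- Separability of a finite cyclic subgroup of a direct product by the family
`Θ_π`: the finite-`C` case. -/
theorem finite_cyclic_sep_in_product (π : Set ℕ) {H K : Type*} [Group H] [Group K]
    (hH : ResiduallyPi π H) (hK : ResiduallyPi π K)
    (h : H) (k : K) (hh : IsOfFinOrder h) (hk : IsOfFinOrder k) :
    ∀ g : H × K, g ∉ Subgroup.zpowers (h, k) →
      ∃ X : Subgroup H, ∃ Y : Subgroup K, InOmega π X ∧ InOmega π Y ∧
        g ∉ ((Subgroup.zpowers (h, k) : Subgroup (H × K)) : Set (H × K)) *
            ((X.prod Y : Subgroup (H × K)) : Set (H × K)) := by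
  rintro ⟨a, b⟩ hg
  have hd : 0 < orderOf h := hh.orderOf_pos
  have he : 0 < orderOf k := hk.orderOf_pos
  set L : ℕ := Nat.lcm (orderOf h) (orderOf k) with hLdef
  have hL0 : 0 < L := Nat.lcm_pos hd he
  have key : ∀ m : ℕ, ∃ (N : Subgroup H) (M : Subgroup K), InOmega π N ∧ InOmega π M ∧
      ¬((h ^ m)⁻¹ * a ∈ N ∧ (k ^ m)⁻¹ * b ∈ M) := by
    intro m
    have hne : ¬(h ^ m = a ∧ k ^ m = b) := by
      rintro ⟨rfl, rfl⟩
      exact hg ⟨(m : ℤ), by simp [Prod.pow_def]⟩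
    rcases not_and_or.mp hne with h1 | h1
    · obtain ⟨N, hN, hNx⟩ := hH ((h ^ m)⁻¹ * a) (by
        intro hc; exact h1 (by rw [← inv_mul_eq_one]; exact hc))
      exact ⟨N, ⊤, hN, inOmega_top π, fun hc => hNx hc.1⟩
    · obtain ⟨M, hM, hMx⟩ := hK ((k ^ m)⁻¹ * b) (by
        intro hc; exact h1 (by rw [← inv_mul_eq_one]; exact hc))
      exact ⟨⊤, M, inOmega_top π, hM, fun hc => hMx hc.2⟩
  choose XF YF hXF hYF hEx using key
  refine ⟨(Finset.range L).inf XF, (Finset.range L).inf YF,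
    inOmega_finset_inf π _ _ (fun i _ => hXF i),
    inOmega_finset_inf π _ _ (fun i _ => hYF i), ?_⟩
  intro hmem
  rw [Set.mem_mul] at hmem
  obtain ⟨c, hc, p, hp, hcp⟩ := hmem
  obtain ⟨n, hn⟩ := hc
  set m : ℕ := (n % (L : ℤ)).toNat with hmdef
  have hnonneg : 0 ≤ n % (L : ℤ) := Int.emod_nonneg n (by exact_mod_cast hL0.ne')
  have hmL : (m : ℤ) = n % (L : ℤ) := Int.toNat_of_nonneg hnonneg
  have hm_lt : m < L := by
    have := Int.emod_lt_of_pos n (by exact_mod_cast hL0 : (0:ℤ) < (L:ℤ))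
    omega
  have hdvd1 : orderOf h ∣ L := by rw [hLdef]; exact Nat.dvd_lcm_left _ _
  have hdvd2 : orderOf k ∣ L := by rw [hLdef]; exact Nat.dvd_lcm_right _ _
  have e1 : h ^ n = h ^ m := zpow_eq_pow_toNat_emod h hdvd1 hL0 n
  have e2 : k ^ n = k ^ m := zpow_eq_pow_toNat_emod k hdvd2 hL0 n
  have hc1 : c.1 = h ^ m := by
    rw [← hn]
    calc ((h, k) ^ n).1 = h ^ n := by simp
      _ = h ^ m := e1
  have hc2 : c.2 = k ^ m := by
    rw [← hn]
    calc ((h, k) ^ n).2 = k ^ n := by simp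
      _ = k ^ m := e2
  have hp' : p ∈ Subgroup.prod ((Finset.range L).inf XF) ((Finset.range L).inf YF) := hp
  rw [Subgroup.mem_prod] at hp'
  have ha : (h ^ m)⁻¹ * a = p.1 := by
    have : a = c.1 * p.1 := by
      have := congrArg Prod.fst hcp; simpa using this.symm
    rw [this, hc1, inv_mul_cancel_left]
  have hb : (k ^ m)⁻¹ * b = p.2 := by
    have : b = c.2 * p.2 := by
      have := congrArg Prod.snd hcp; simpa using this.symm
    rw [this, hc2, inv_mul_cancel_left]
  exact hEx m ⟨ha ▸ (Finset.inf_le (Finset.mem_range.mpr hm_lt) : _ ≤ XF m) hp'.1,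
    hb ▸ (Finset.inf_le (Finset.mem_range.mpr hm_lt) : _ ≤ YF m) hp'.2⟩
end
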